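/- Let (a_i)_{i∈ℤ} and (b_i)_{i∈ℤ} be sequences of nonnegative integers such that: there is an integer N with a_i = 0 for all i ≥ N and b_i = 0 for all i ≤ −N; a_i → +∞ as i → −∞ and b_i → +∞ as i → +∞; (a_i) is non-increasing; (b_i) is non-decreasing; a_i ≤ b_i for i ≥ 0; and a_i ≥ b_i for i < 0. Let X = Y = ⊕_{i∈ℤ} T⁺ and let D : X → Y be the F[U]-module homomorphism whose i-th coordinate of D((x_j)_j) is U^{a_i}·x_i + U^{b_{i−1}}·x_{i−1}. If a_0 < b_{−1}, then there is an isomorphism of F[U]-modules ker(D) ≅ T⁺ ⊕ (⊕_{n≥2} τ(b_{−n})) ⊕ (⊕_{n≥0} τ(a_n)). (Ungraded form of the second case of Lemma 3.4 of the paper.) -/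

import Mathlib

open Polynomial LaurentPolynomial DirectSum Filter

set_option maxHeartbeats 1000000
set_option synthInstance.maxHeartbeats 400000

noncomputable section

/-- The tower `T⁺ = F[U,U⁻¹] / U·F[U]` as an `F[U]`-module. -/
abbrev Tplus (F : Type*) [Field F] :=
  LaurentPolynomial F ⧸ (Submodule.span (Polynomial F) {(T 1 : LaurentPolynomial F)})

/-- `τ(N)`: the kernel of multiplication by `U^N` on `T⁺`. -/
def tau (F : Type*) [Field F] (N : ℕ) : Submodule (Polynomial F) (Tplus F) :=
  LinearMap.ker (LinearMap.lsmul (Polynomial F) (Tplus F) ((X : Polynomial F) ^ N))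

namespace Stmt2Aux

variable {F : Type*} [Field F]

lemma pow_smul_eq_zero_of_le {m n : ℕ} (hmn : m ≤ n) {t : Tplus F}
    (h : (X : Polynomial F) ^ m • t = 0) : (X : Polynomial F) ^ n • t = 0 := by
  have he : n = (n - m) + m := by omega
  rw [he, pow_add, mul_smul, h, smul_zero]

lemma exists_pow_smul_eq_zero (t : Tplus F) : ∃ k : ℕ, (X : Polynomial F) ^ k • t = 0 := by
  obtain ⟨f, rfl⟩ := Submodule.Quotient.mk_surjective _ t
  obtain ⟨n, f', hf⟩ := f.exists_T_pow
  refine ⟨n + 1, ?_⟩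
  rw [← Submodule.Quotient.mk_smul, Submodule.Quotient.mk_eq_zero]
  have : (X : Polynomial F) ^ (n + 1) • f = f' • (T 1 : LaurentPolynomial F) := by
    rw [Algebra.smul_def, Algebra.smul_def, algebraMap_eq_toLaurent, algebraMap_eq_toLaurent,
      toLaurent_X_pow, hf]
    push_cast [T_add]
    ring
  rw [this]
  exact Submodule.smul_mem _ _ (Submodule.mem_span_singleton_self _)

/-- exponents of the tower element -/
def d (a b : ℤ → ℕ) : ℤ → ℕ := fun i =>
  if -1 ≤ i then ∑ k ∈ Finset.range (i + 1).toNat, (b ((k : ℤ) - 1) - a (k : ℤ))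
  else ∑ k ∈ Finset.range (-(i + 1)).toNat, (a (-1 - (k : ℤ)) - b (-2 - (k : ℤ)))

variable {a b : ℤ → ℕ}

lemma d_neg_one : d a b (-1) = 0 := by simp [d]

lemma d_eq_left {i : ℤ} (hi : i ≤ -1) :
    d a b i = ∑ k ∈ Finset.range (-(i + 1)).toNat, (a (-1 - (k : ℤ)) - b (-2 - (k : ℤ))) := by
  rcases eq_or_lt_of_le hi with h | h
  · subst h; simp [d]
  · simp [d, if_neg (by omega : ¬ (-1:ℤ) ≤ i)]

section
variable (hamono : Antitone a) (hbmono : Monotone b)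
  (hab₂ : ∀ i : ℤ, i < 0 → b i ≤ a i) (h₀ : a 0 < b (-1))

include hamono hbmono h₀ in
lemma lt_b_right {i : ℤ} (hi : 0 ≤ i) : a i < b (i - 1) :=
  lt_of_le_of_lt (hamono hi) (lt_of_lt_of_le h₀ (hbmono (by omega)))

include hamono hbmono hab₂ in
lemma b_le_left {i : ℤ} (hi : i ≤ -1) : b (i - 1) ≤ a i :=
  le_trans (hbmono (by omega : i - 1 ≤ -1)) (le_trans (hab₂ (-1) (by norm_num)) (hamono hi))

include hamono hbmono hab₂ h₀ in
lemma hd (i : ℤ) : d a b i + a i = d a b (i - 1) + b (i - 1) := by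
  rcases le_or_gt 0 i with hi | hi
  · have h1 : a i ≤ b (i - 1) := (lt_b_right hamono hbmono h₀ hi).le
    have e1 : (-1 : ℤ) ≤ i := by omega
    have e2 : (-1 : ℤ) ≤ i - 1 := by omega
    have e3 : (i + 1).toNat = (i - 1 + 1).toNat + 1 := by omega
    have e4 : (((i - 1 + 1).toNat : ℤ)) = i := by omega
    simp only [d, if_pos e1, if_pos e2, e3, Finset.sum_range_succ, e4]
    omega
  · have hi' : i ≤ -1 := by omega
    have h2 : b (i - 1) ≤ a i := b_le_left hamono hbmono hab₂ hi'
    have e3 : (-(i - 1 + 1)).toNat = (-(i + 1)).toNat + 1 := by omega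
    have e4 : (((-(i + 1)).toNat : ℤ)) = -(i + 1) := by omega
    rw [d_eq_left hi', d_eq_left (by omega : i - 1 ≤ -1), e3, Finset.sum_range_succ, e4]
    have e5 : -1 - -(i + 1) = i := by ring
    have e6 : -2 - -(i + 1) = i - 1 := by ring
    rw [e5, e6]
    omega

include hamono hbmono h₀ in
lemma d_lower_right {i : ℤ} (hi : -1 ≤ i) : i + 1 ≤ (d a b i : ℤ) := by
  have key : ∀ k ∈ Finset.range (i + 1).toNat, 1 ≤ b ((k : ℤ) - 1) - a (k : ℤ) := by
    intro k _
    have := lt_b_right hamono hbmono h₀ (by positivity : (0:ℤ) ≤ (k:ℤ))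
    omega
  have := Finset.card_nsmul_le_sum _ _ _ key
  simp only [smul_eq_mul, mul_one, Finset.card_range] at this
  have hd' : d a b i = ∑ k ∈ Finset.range (i + 1).toNat, (b ((k : ℤ) - 1) - a (k : ℤ)) := by
    simp [d, if_pos hi]
  omega

include hbmono in
lemma d_lower_left {i : ℤ} (hi : i ≤ -2) : a (i + 1) ≤ d a b i + b (-1) := by
  have hk0 : ((-(i + 2)).toNat : ℤ) = -(i + 2) := by omega
  have hmem : (-(i + 2)).toNat ∈ Finset.range (-(i + 1)).toNat := by
    rw [Finset.mem_range]; omega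
  have hsingle := Finset.single_le_sum (f := fun k : ℕ => a (-1 - (k : ℤ)) - b (-2 - (k : ℤ)))
    (fun k _ => Nat.zero_le _) hmem
  rw [← d_eq_left (by omega : i ≤ -1)] at hsingle
  have e5 : -1 - -(i + 2) = i + 1 := by ring
  have e6 : -2 - -(i + 2) = i := by ring
  simp only [hk0, e5, e6] at hsingle
  have : b i ≤ b (-1) := hbmono (by omega)
  omega

end

/-- sign sequence -/
def eps (i : ℤ) : ℤ := (Int.negOnePow i : ℤ)

lemma eps_sub_one (i : ℤ) : eps (i - 1) = -eps i := by
  have h := Int.negOnePow_succ (i - 1)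
  rw [sub_add_cancel] at h
  unfold eps
  rw [h, Units.val_neg]
  ring

lemma eps_neg_one : eps (-1) = -1 := by
  simp [eps, Int.negOnePow_neg]

/-- the tower map, pointwise, with an explicit support bound -/
def phiFun (a b : ℤ → ℕ) (S : Finset ℤ) (t : Tplus F) : ⨁ _i : ℤ, Tplus F :=
  DirectSum.mk (fun _ : ℤ => Tplus F) S fun i => eps i.1 • ((X : Polynomial F) ^ d a b i.1 • t)

lemma phiFun_apply {S : Finset ℤ} {t : Tplus F}
    (hS : ∀ i : ℤ, i ∉ S → (X : Polynomial F) ^ d a b i • t = 0) (j : ℤ) :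
    phiFun a b S t j = eps j • ((X : Polynomial F) ^ d a b j • t) := by
  by_cases hj : j ∈ S
  · exact DirectSum.mk_apply_of_mem hj
  · rw [phiFun, DirectSum.mk_apply_of_notMem hj, hS j hj, smul_zero]

section
variable (ha : Tendsto a atBot atTop) (hamono : Antitone a) (hbmono : Monotone b)
  (h₀ : a 0 < b (-1))

include ha hamono hbmono h₀ in
lemma exists_S (t : Tplus F) :
    ∃ S : Finset ℤ, ∀ i : ℤ, i ∉ S → (X : Polynomial F) ^ d a b i • t = 0 := by
  obtain ⟨k, hk⟩ := exists_pow_smul_eq_zero t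
  obtain ⟨I, hI⟩ := eventually_atBot.mp (ha.eventually (eventually_ge_atTop (k + b (-1))))
  refine ⟨Finset.Icc (min (I - 1) (-2)) k, fun i hi => ?_⟩
  have hdi : k ≤ d a b i := by
    rw [Finset.mem_Icc, not_and_or] at hi
    rcases hi with hi | hi
    · push_neg at hi
      have h2 : i ≤ -2 := by omega
      have hL := d_lower_left (a := a) hbmono h2
      have hA := hI (i + 1) (by omega)
      omega
    · push_neg at hi
      have hR := d_lower_right hamono hbmono h₀ (by omega : (-1:ℤ) ≤ i)
      omega
  exact pow_smul_eq_zero_of_le hdi hk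

variable (a b)

/-- the tower map as a linear map -/
def phi : Tplus F →ₗ[Polynomial F] ⨁ _i : ℤ, Tplus F where
  toFun t := phiFun a b (exists_S ha hamono hbmono h₀ t).choose t
  map_add' t t' := by
    refine DFinsupp.ext fun j => ?_
    rw [DFinsupp.add_apply,
      phiFun_apply (exists_S ha hamono hbmono h₀ (t + t')).choose_spec j,
      phiFun_apply (exists_S ha hamono hbmono h₀ t).choose_spec j,
      phiFun_apply (exists_S ha hamono hbmono h₀ t').choose_spec j,
      smul_add, smul_add]
  map_smul' p t := by
    refine DFinsupp.ext fun j => ?_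
    rw [RingHom.id_apply, DFinsupp.smul_apply,
      phiFun_apply (exists_S ha hamono hbmono h₀ (p • t)).choose_spec j,
      phiFun_apply (exists_S ha hamono hbmono h₀ t).choose_spec j,
      smul_comm ((X : Polynomial F) ^ d a b j) p t, smul_comm (eps j) p]

lemma phi_apply (t : Tplus F) (j : ℤ) :
    phi a b ha hamono hbmono h₀ t j = eps j • ((X : Polynomial F) ^ d a b j • t) :=
  phiFun_apply (exists_S ha hamono hbmono h₀ t).choose_spec j

end

/-- inclusion of a direct sum of torsion submodules along a coordinate embedding -/
def iota (c : ℕ → ℤ) (τ : ℕ → Submodule (Polynomial F) (Tplus F)) :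
    (⨁ n, τ n) →ₗ[Polynomial F] ⨁ _i : ℤ, Tplus F :=
  DirectSum.toModule _ _ _ fun n =>
    (DirectSum.lof (Polynomial F) ℤ (fun _ => Tplus F) (c n)).comp (τ n).subtype

lemma iota_lof (c : ℕ → ℤ) (τ : ℕ → Submodule (Polynomial F) (Tplus F)) (n : ℕ) (x : τ n) :
    iota c τ (DirectSum.lof (Polynomial F) ℕ _ n x)
      = DirectSum.lof (Polynomial F) ℤ (fun _ => Tplus F) (c n) (x : Tplus F) := by
  rw [iota, DirectSum.toModule_lof]
  rfl

lemma iota_apply_ne (c : ℕ → ℤ) (τ : ℕ → Submodule (Polynomial F) (Tplus F))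
    (u : ⨁ n, τ n) (j : ℤ) (hj : ∀ n, j ≠ c n) : iota c τ u j = 0 := by
  induction u using DirectSum.induction_on with
  | zero => rw [map_zero, DFinsupp.zero_apply]
  | of n x =>
      have h1 : iota c τ (DirectSum.of _ n x)
          = DirectSum.lof (Polynomial F) ℤ (fun _ => Tplus F) (c n) (x : Tplus F) := by
        rw [← DirectSum.lof_eq_of (Polynomial F), iota_lof]
      rw [h1, DirectSum.lof_eq_of, DirectSum.of_eq_of_ne _ _ _ (fun h => hj n h)]
  | add u v hu hv =>
      rw [map_add, DFinsupp.add_apply, hu, hv, add_zero]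

lemma iota_apply_eq (c : ℕ → ℤ) (hc : Function.Injective c)
    (τ : ℕ → Submodule (Polynomial F) (Tplus F))
    (u : ⨁ n, τ n) (n : ℕ) : iota c τ u (c n) = (u n : Tplus F) := by
  induction u using DirectSum.induction_on with
  | zero => rw [map_zero, DFinsupp.zero_apply, DFinsupp.zero_apply, ZeroMemClass.coe_zero]
  | of m x =>
      have h1 : iota c τ (DirectSum.of _ m x)
          = DirectSum.lof (Polynomial F) ℤ (fun _ => Tplus F) (c m) (x : Tplus F) := by
        rw [← DirectSum.lof_eq_of (Polynomial F), iota_lof]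
      rcases eq_or_ne m n with rfl | hmn
      · rw [h1, DirectSum.lof_apply, DirectSum.of_eq_same]
      · rw [h1, DirectSum.lof_eq_of, DirectSum.of_eq_of_ne _ _ _ (fun h => hmn (hc h).symm),
          DirectSum.of_eq_of_ne _ _ _ (Ne.symm hmn), ZeroMemClass.coe_zero]
  | add u v hu hv =>
      rw [map_add, DFinsupp.add_apply, hu, hv, DFinsupp.add_apply, Submodule.coe_add]

end Stmt2Aux

open Stmt2Aux in
/-- Lemma 3.4, second case (`a₀ < b₋₁`), ungraded form:
`ker D ≅ T⁺ ⊕ (⊕_{n ≥ 2} τ(b₋ₙ)) ⊕ (⊕_{n ≥ 0} τ(aₙ))`. -/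
theorem stmt_2 (F : Type*) [Field F] (a b : ℤ → ℕ)
    (hvanish : ∃ N : ℤ, (∀ i, N ≤ i → a i = 0) ∧ (∀ i, i ≤ -N → b i = 0))
    (ha : Tendsto a atBot atTop) (hb : Tendsto b atTop atTop)
    (hamono : Antitone a) (hbmono : Monotone b)
    (hab₁ : ∀ i : ℤ, 0 ≤ i → a i ≤ b i) (hab₂ : ∀ i : ℤ, i < 0 → b i ≤ a i)
    (h₀ : a 0 < b (-1))
    (D : (⨁ _i : ℤ, Tplus F) →ₗ[Polynomial F] (⨁ _i : ℤ, Tplus F))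
    (hD : ∀ (x : ⨁ _i : ℤ, Tplus F) (i : ℤ),
      D x i = (X : Polynomial F) ^ (a i) • x i + (X : Polynomial F) ^ (b (i - 1)) • x (i - 1)) :
    Nonempty ((LinearMap.ker D) ≃ₗ[Polynomial F]
      (Tplus F × (⨁ n : ℕ, tau F (b (-((n : ℤ) + 2)))) × (⨁ n : ℕ, tau F (a (n : ℤ))))) := by
  classical
  set φ := phi (F := F) a b ha hamono hbmono h₀ with hφdef
  set cb : ℕ → ℤ := fun n => -((n : ℤ) + 2) with hcb
  set ca : ℕ → ℤ := fun n => (n : ℤ) with hca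
  set ιb := iota cb (fun n => tau F (b (-((n : ℤ) + 2)))) with hιb
  set ιa := iota ca (fun n => tau F (a (n : ℤ))) with hιa
  set Ψ := φ.coprod (ιb.coprod ιa) with hΨdef
  have hcbinj : Function.Injective cb := fun m n h => by simp only [hcb] at h; omega
  have hcainj : Function.Injective ca := fun m n h => by simp only [hca] at h; omega
  have hΨ : ∀ (t : Tplus F) v u, Ψ (t, (v, u)) = φ t + (ιb v + ιa u) := fun t v u => rfl
  have hφa : ∀ (t : Tplus F) (j : ℤ),
      φ t j = eps j • ((X : Polynomial F) ^ d a b j • t) := phi_apply (F := F) a b ha hamono hbmono h₀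
  -- the torsion coordinates of tau
  have htau : ∀ (N : ℕ) (v : Tplus F), v ∈ tau F N ↔ (X : Polynomial F) ^ N • v = 0 := by
    intro N v
    simp [tau, LinearMap.mem_ker]
  -- local elements are in the kernel
  have hlof : ∀ (j : ℤ) (v : Tplus F), (X : Polynomial F) ^ a j • v = 0 →
      (X : Polynomial F) ^ b j • v = 0 →
      D (DirectSum.lof (Polynomial F) ℤ (fun _ => Tplus F) j v) = 0 := by
    intro j v hva hvb
    refine DFinsupp.ext fun i => ?_
    rw [hD, DFinsupp.zero_apply]
    rcases eq_or_ne i j with rfl | hij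
    · rw [DirectSum.lof_apply, hva, DirectSum.lof_eq_of,
        DirectSum.of_eq_of_ne _ _ _ (by omega), smul_zero, add_zero]
    · rcases eq_or_ne (i - 1) j with h | h
      · rw [h, DirectSum.lof_apply, DirectSum.lof_eq_of,
          DirectSum.of_eq_of_ne _ _ _ hij, smul_zero, zero_add]
        exact hvb
      · rw [DirectSum.lof_eq_of, DirectSum.of_eq_of_ne _ _ _ hij,
          DirectSum.of_eq_of_ne _ _ _ h, smul_zero, smul_zero, add_zero]
  -- the tower is in the kernel
  have hDφ : ∀ t : Tplus F, D (φ t) = 0 := by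
    intro t
    refine DFinsupp.ext fun i => ?_
    rw [hD, DFinsupp.zero_apply, hφa, hφa,
      smul_comm ((X : Polynomial F) ^ a i) (eps i),
      smul_comm ((X : Polynomial F) ^ b (i - 1)) (eps (i - 1)),
      smul_smul, smul_smul, ← pow_add, ← pow_add]
    have he : b (i - 1) + d a b (i - 1) = a i + d a b i := by
      have := hd hamono hbmono hab₂ h₀ i
      omega
    rw [he, eps_sub_one, neg_smul, add_neg_cancel]
  have hDιb : ∀ v, D (ιb v) = 0 := by
    intro v
    induction v using DirectSum.induction_on with
    | zero => rw [map_zero, map_zero]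
    | of n x =>
        rw [hιb, ← DirectSum.lof_eq_of (Polynomial F), iota_lof]
        refine hlof _ _ ?_ ?_
        · have hx := (htau _ x).mp x.2
          have hba : b (cb n) ≤ a (cb n) := hab₂ _ (by simp only [hcb]; omega)
          rw [show cb n = -((n : ℤ) + 2) from rfl] at hba
          exact pow_smul_eq_zero_of_le hba hx
        · exact (htau _ x).mp x.2
    | add u v hu hv => rw [map_add, map_add, hu, hv, add_zero]
  have hDιa : ∀ u, D (ιa u) = 0 := by
    intro u
    induction u using DirectSum.induction_on with
    | zero => rw [map_zero, map_zero]
    | of n x =>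
        rw [hιa, ← DirectSum.lof_eq_of (Polynomial F), iota_lof]
        refine hlof _ _ ((htau _ x).mp x.2) ?_
        have hx := (htau _ x).mp x.2
        have hba : a (ca n) ≤ b (ca n) := hab₁ _ (by simp [hca])
        rw [show ca n = ((n : ℤ)) from rfl] at hba
        exact pow_smul_eq_zero_of_le hba hx
    | add u v hu hv => rw [map_add, map_add, hu, hv, add_zero]
  -- range Ψ ≤ ker D
  have hle : LinearMap.range Ψ ≤ LinearMap.ker D := by
    rintro x ⟨⟨t, v, u⟩, rfl⟩
    rw [LinearMap.mem_ker, hΨ, map_add, map_add, hDφ, hDιb, hDιa, add_zero, add_zero]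
  -- ker D ≤ range Ψ
  have hge : LinearMap.ker D ≤ LinearMap.range Ψ := by
    intro x hx
    rw [LinearMap.mem_ker] at hx
    set t : Tplus F := -(x (-1)) with ht
    set y : ⨁ _i : ℤ, Tplus F := x - φ t with hy
    have hyker : D y = 0 := by
      rw [hy, map_sub, hx, hDφ, sub_zero]
    have hyi : ∀ i : ℤ, (X : Polynomial F) ^ a i • y i
        + (X : Polynomial F) ^ b (i - 1) • y (i - 1) = 0 := by
      intro i
      rw [← hD y i, hyker, DFinsupp.zero_apply]
    have hym1 : y (-1) = 0 := by
      rw [hy, DFinsupp.sub_apply, hφa, d_neg_one, eps_neg_one, pow_zero, one_smul,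
        neg_one_zsmul, ht, neg_neg, sub_self]
    -- right-hand torsion
    have hu : ∀ n : ℕ, (X : Polynomial F) ^ a (n : ℤ) • y (n : ℤ) = 0 := by
      intro n
      induction n with
      | zero =>
          have h := hyi 0
          rw [show (0:ℤ) - 1 = -1 by norm_num, hym1, smul_zero, add_zero] at h
          simpa using h
      | succ n ih =>
          have h := hyi ((n : ℤ) + 1)
          rw [show (n : ℤ) + 1 - 1 = (n : ℤ) by ring] at h
          have h2 : (X : Polynomial F) ^ b (n : ℤ) • y (n : ℤ) = 0 :=
            pow_smul_eq_zero_of_le (hab₁ _ (by positivity)) ih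
          rw [h2, add_zero] at h
          push_cast
          exact h
    -- left-hand torsion
    have hv : ∀ n : ℕ, (X : Polynomial F) ^ b (-((n : ℤ) + 2)) • y (-((n : ℤ) + 2)) = 0 := by
      intro n
      induction n with
      | zero =>
          have h := hyi (-1)
          rw [hym1, smul_zero, zero_add, show (-1:ℤ) - 1 = -2 by norm_num] at h
          simpa using h
      | succ n ih =>
          have h := hyi (-((n : ℤ) + 2))
          have h1 : (X : Polynomial F) ^ a (-((n : ℤ) + 2)) • y (-((n : ℤ) + 2)) = 0 :=
            pow_smul_eq_zero_of_le (hab₂ _ (by omega)) ih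
          rw [h1, zero_add, show -((n : ℤ) + 2) - 1 = -(((n : ℕ) + 1 : ℕ) : ℤ) - 2 by push_cast; ring] at h
          have : -((((n : ℕ) + 1 : ℕ) : ℤ)) - 2 = -((((n + 1 : ℕ)) : ℤ) + 2) := by push_cast; ring
          rw [this] at h
          exact h
    -- each coordinate piece of y is in the range
    have hofmem : ∀ j : ℤ, DirectSum.of (fun _ : ℤ => Tplus F) j (y j) ∈ LinearMap.range Ψ := by
      intro j
      rcases lt_trichotomy j (-1) with hj | hj | hj
      · -- j ≤ -2
        set n : ℕ := (-(j + 2)).toNat with hn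
        have hcn : cb n = j := by simp only [hcb, hn]; omega
        have hmem : y j ∈ tau F (b (-((n : ℤ) + 2))) := by
          rw [htau]
          have := hv n
          rw [show -((n : ℤ) + 2) = j by rw [← hcn]] at this ⊢
          exact this
        refine ⟨(0, DirectSum.lof (Polynomial F) ℕ _ n ⟨y j, hmem⟩, 0), ?_⟩
        rw [hΨ, map_zero, map_zero, zero_add, add_zero, hιb, iota_lof]
        rw [show cb n = j from hcn, DirectSum.lof_eq_of]
      · -- j = -1
        rw [hj, hym1, map_zero]
        exact Submodule.zero_mem _
      · -- j ≥ 0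
        set n : ℕ := j.toNat with hn
        have hcn : ca n = j := by simp only [hca, hn]; omega
        have hmem : y j ∈ tau F (a (n : ℤ)) := by
          rw [htau]
          have := hu n
          rw [show (n : ℤ) = j by rw [← hcn]] at this ⊢
          exact this
        refine ⟨(0, 0, DirectSum.lof (Polynomial F) ℕ _ n ⟨y j, hmem⟩), ?_⟩
        rw [hΨ, map_zero, map_zero, zero_add, zero_add, hιa, iota_lof]
        rw [show ca n = j from hcn, DirectSum.lof_eq_of]
    have hymem : y ∈ LinearMap.range Ψ := by
      rw [← DirectSum.sum_support_of (x := y)]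
      exact Submodule.sum_mem _ fun j _ => hofmem j
    have hφmem : φ t ∈ LinearMap.range Ψ := ⟨(t, 0, 0), by rw [hΨ, map_zero, map_zero, add_zero, add_zero]⟩
    have hxy : x = φ t + y := by rw [hy]; abel
    rw [hxy]
    exact Submodule.add_mem _ hφmem hymem
  have hrange : LinearMap.range Ψ = LinearMap.ker D := le_antisymm hle hge
  -- injectivity
  have hinj : Function.Injective Ψ := by
    refine fun p q hpq => sub_eq_zero.mp ((LinearMap.ker_eq_bot' (f := Ψ)).mp ?_ (p - q) ?_)
    swap
    · have hpq' := Ψ.map_add (p - q) q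
      have e : Ψ (p - q + q) = Ψ p := congrArg Ψ (sub_add_cancel p q)
      rw [e, hpq] at hpq'
      have h2 := congrArg (fun z => z - Ψ q) hpq'
      simp only [sub_self, add_sub_cancel_right] at h2
      exact (add_sub_cancel_right (Ψ (p - q)) (Ψ q)).symm.trans h2.symm
    rw [Submodule.eq_bot_iff]
    rintro ⟨t, v, u⟩ hp
    rw [LinearMap.mem_ker, hΨ] at hp
    have hpj : ∀ j : ℤ, φ t j + (ιb v j + ιa u j) = 0 := by
      intro j
      rw [← DFinsupp.add_apply, ← DFinsupp.add_apply, hp, DFinsupp.zero_apply]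
    have ht : t = 0 := by
      have h := hpj (-1)
      rw [hφa, d_neg_one, eps_neg_one, pow_zero, one_smul, neg_one_zsmul,
        iota_apply_ne _ _ _ _ (fun n => by simp only [hcb]; omega),
        iota_apply_ne _ _ _ _ (fun n => by simp only [hca]; omega),
        add_zero, add_zero, neg_eq_zero] at h
      exact h
    have hu0 : u = 0 := by
      refine DFinsupp.ext fun n => ?_
      have h := hpj (ca n)
      rw [ht, map_zero, DFinsupp.zero_apply, zero_add,
        iota_apply_ne _ _ _ _ (fun m => by simp only [hca, hcb]; omega),
        iota_apply_eq ca hcainj, zero_add] at h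
      exact Subtype.ext h
    have hv0 : v = 0 := by
      refine DFinsupp.ext fun n => ?_
      have h := hpj (cb n)
      rw [ht, map_zero, DFinsupp.zero_apply, zero_add,
        iota_apply_eq cb hcbinj,
        iota_apply_ne _ _ _ _ (fun m => by simp only [hca, hcb]; omega),
        add_zero] at h
      exact Subtype.ext h
    rw [ht, hu0, hv0]
    rfl
  exact ⟨(LinearEquiv.ofEq _ _ hrange.symm).trans (LinearEquiv.ofInjective Ψ hinj).symm⟩
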